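/- Let Λ be a ring and B a metric space. Let C and C' be ε-chain complexes of geometric modules over B and let f : C → C' be an ε-chain equivalence. Then the algebraic mapping cone C(f) of f is 3ε-contractible; that is, there exist morphisms s_n : C(f)_n → C(f)_{n+1} of geometric modules, each of radius < 3ε, such that d_{n+1}∘s_n + s_{n−1}∘d_n equals the identity on C(f)_n for every n. -/
import Mathlib


/-!
Geometric modules over a metric space `B` with coefficients in a ring `Λ`,
geometric chain complexes, ε-chain maps, ε-chain equivalences, the algebraic
mapping cone, and ε-contractibility.

A geometric chain complex is indexed by `n : ℤ` with differential
`d n : C_{n+1} → C_n`.  The mapping cone `C(f)` of a chain map `f : C → C'`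
has `C(f)_m = C_{m-1} ⊕ C'_m`; here it is encoded by `coneBasis n`, the basis
of `C(f)_{n+1} = C_n ⊕ C'_{n+1}` (as `n` ranges over all of `ℤ` this gives all
degrees of the cone).
-/

/-- Column-finiteness condition: the matrix `f : S → T → Λ` defines a morphism of
geometric (free) modules `Λ[S] → Λ[T]` iff for each fixed `s ∈ S` only finitely many
entries `f s t` are nonzero. -/
def IsGeometricMorphism {Λ : Type*} [Ring Λ] {S T : Type*} (f : S → T → Λ) : Prop :=
  ∀ s : S, (Function.support (f s)).Finite

/-- `f` is an `ε`-morphism of geometric modules from `(Λ[S], φ)` to `(Λ[T], ψ)`: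
it is a morphism (column-finite matrix) and it has radius `< ε`, i.e.
`dist (φ s) (ψ t) < ε` whenever `f s t ≠ 0`. -/
def IsEpsMorphism {Λ : Type*} [Ring Λ] {B : Type*} [MetricSpace B] {S T : Type*}
    (φ : S → B) (ψ : T → B) (f : S → T → Λ) (ε : ℝ) : Prop :=
  IsGeometricMorphism f ∧ ∀ s t, f s t ≠ 0 → dist (φ s) (ψ t) < ε

/-- The composite of geometric morphisms, given by the matrix product
`(g ∘ f)_{su} = Σ_t g_{tu} · f_{st}` (a finite sum when `f` is column-finite). -/
noncomputable def geomComp {Λ : Type*} [Ring Λ] {S T U : Type*}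
    (g : T → U → Λ) (f : S → T → Λ) : S → U → Λ :=
  fun s u => ∑ᶠ t, g t u * f s t

open Classical in
/-- The identity morphism of the geometric module `Λ[S]`. -/
noncomputable def idMor (Λ : Type*) [Ring Λ] (S : Type*) : S → S → Λ :=
  fun a b => if a = b then 1 else 0

/-- A geometric chain complex over `B`: a sequence of geometric modules
`(Λ[basis n], label n)` (indexed by `n : ℤ`) together with morphisms
`d n : Λ[basis (n+1)] → Λ[basis n]` satisfying `d ∘ d = 0`. -/
structure GeomComplex (Λ : Type*) [Ring Λ] (B : Type*) [MetricSpace B] where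
  basis : ℤ → Type*
  label : ∀ n, basis n → B
  d : ∀ n, basis (n + 1) → basis n → Λ
  d_geom : ∀ n, IsGeometricMorphism (d n)
  d_sq : ∀ n, geomComp (d n) (d (n + 1)) = fun _ _ => 0

/-- An `ε`-chain complex: a geometric chain complex all of whose differentials
are `ε`-morphisms. -/
def IsEpsComplex {Λ : Type*} [Ring Λ] {B : Type*} [MetricSpace B]
    (C : GeomComplex Λ B) (ε : ℝ) : Prop :=
  ∀ n, IsEpsMorphism (C.label (n + 1)) (C.label n) (C.d n) ε

/-- A chain map `f : C → C'` of geometric chain complexes: a sequence of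
morphisms of geometric modules `f n : Λ[C.basis n] → Λ[C'.basis n]` commuting
with the differentials. -/
def IsChainMap {Λ : Type*} [Ring Λ] {B : Type*} [MetricSpace B]
    (C C' : GeomComplex Λ B) (f : ∀ n, C.basis n → C'.basis n → Λ) : Prop :=
  (∀ n, IsGeometricMorphism (f n)) ∧
    ∀ n, geomComp (f n) (C.d n) = geomComp (C'.d n) (f (n + 1))

/-- An `ε`-chain map of geometric chain complexes: a chain map each of whose
components is an `ε`-morphism. -/
def IsEpsChainMap {Λ : Type*} [Ring Λ] {B : Type*} [MetricSpace B]
    (C C' : GeomComplex Λ B) (f : ∀ n, C.basis n → C'.basis n → Λ) (ε : ℝ) : Prop :=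
  IsChainMap C C' f ∧ ∀ n, IsEpsMorphism (C.label n) (C'.label n) (f n) ε

/-- An `ε`-chain equivalence `f : C → C'`: an `ε`-chain map admitting an
`ε`-chain map `g : C' → C` and chain homotopies `h`, `h'` of radius `< ε` with
`∂ ∘ h + h ∘ ∂ = id − g∘f` and `∂' ∘ h' + h' ∘ ∂' = id − f∘g` in every degree
(the degree-`(n+1)` equation is stated for every `n : ℤ`, which covers all
degrees). -/
def IsEpsChainEquiv {Λ : Type*} [Ring Λ] {B : Type*} [MetricSpace B]
    (C C' : GeomComplex Λ B) (f : ∀ n, C.basis n → C'.basis n → Λ) (ε : ℝ) : Prop :=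
  IsEpsChainMap C C' f ε ∧
    ∃ g : ∀ n, C'.basis n → C.basis n → Λ, IsEpsChainMap C' C g ε ∧
      ∃ h : ∀ n, C.basis n → C.basis (n + 1) → Λ,
        ∃ h' : ∀ n, C'.basis n → C'.basis (n + 1) → Λ,
          (∀ n, IsEpsMorphism (C.label n) (C.label (n + 1)) (h n) ε) ∧
          (∀ n, IsEpsMorphism (C'.label n) (C'.label (n + 1)) (h' n) ε) ∧
          (∀ n, geomComp (C.d (n + 1)) (h (n + 1)) + geomComp (h n) (C.d n) =
            idMor Λ (C.basis (n + 1)) - geomComp (g (n + 1)) (f (n + 1))) ∧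
          (∀ n, geomComp (C'.d (n + 1)) (h' (n + 1)) + geomComp (h' n) (C'.d n) =
            idMor Λ (C'.basis (n + 1)) - geomComp (f (n + 1)) (g (n + 1)))

section Cone

variable {Λ : Type*} [Ring Λ] {B : Type*} [MetricSpace B]

/-- Basis of the algebraic mapping cone `C(f)` of `f : C → C'` in degree `n + 1`:
`C(f)_{n+1} = C_n ⊕ C'_{n+1}`. -/
abbrev coneBasis (C C' : GeomComplex Λ B) (n : ℤ) : Type _ :=
  C.basis n ⊕ C'.basis (n + 1)

/-- Labelling map of the mapping cone in degree `n + 1`. -/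
def coneLabel (C C' : GeomComplex Λ B) (n : ℤ) : coneBasis C C' n → B :=
  Sum.elim (C.label n) (C'.label (n + 1))

/-- Differential of the mapping cone `C(f)`, from degree `n + 2` to degree
`n + 1`: `d (c, c') = (−∂ c, f c + ∂' c')`. -/
def coneD (C C' : GeomComplex Λ B) (f : ∀ n, C.basis n → C'.basis n → Λ) (n : ℤ) :
    coneBasis C C' (n + 1) → coneBasis C C' n → Λ
  | Sum.inl c, Sum.inl c₀ => - C.d n c c₀
  | Sum.inl c, Sum.inr c' => f (n + 1) c c'
  | Sum.inr _, Sum.inl _ => 0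
  | Sum.inr c', Sum.inr c'₀ => C'.d (n + 1) c' c'₀

end Cone


/-! ### Auxiliary infrastructure for geometric morphisms -/

section GeomAux

open Function

variable {Λ : Type*} [Ring Λ]

theorem geomComp_eq_sum {S T U : Type*} (g : T → U → Λ) (f : S → T → Λ) {s : S}
    {F : Finset T} (hF : Function.support (f s) ⊆ ↑F) (u : U) :
    geomComp g f s u = ∑ t ∈ F, g t u * f s t := by
  refine finsum_eq_sum_of_support_subset _ fun t ht => hF ?_
  rw [Function.mem_support] at ht ⊢
  exact fun h0 => ht (by rw [h0, mul_zero])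

theorem exists_of_geomComp_ne_zero {S T U : Type*} {g : T → U → Λ} {f : S → T → Λ} {s : S} {u : U}
    (h : geomComp g f s u ≠ 0) : ∃ t, g t u ≠ 0 ∧ f s t ≠ 0 := by
  by_contra hc
  push_neg at hc
  apply h
  apply finsum_eq_zero_of_forall_eq_zero
  intro t
  by_cases h1 : g t u = 0
  · rw [h1, zero_mul]
  · rw [hc t h1, mul_zero]

theorem IsGeometricMorphism.comp {S T U : Type*} {g : T → U → Λ} {f : S → T → Λ}
    (hg : IsGeometricMorphism g) (hf : IsGeometricMorphism f) :
    IsGeometricMorphism (geomComp g f) := by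
  intro s
  refine Set.Finite.subset ((hf s).biUnion fun t _ => hg t) ?_
  intro u hu
  obtain ⟨t, hgt, hft⟩ := exists_of_geomComp_ne_zero hu
  exact Set.mem_biUnion hft hgt

theorem IsGeometricMorphism.add {S T : Type*} {f₁ f₂ : S → T → Λ}
    (h₁ : IsGeometricMorphism f₁) (h₂ : IsGeometricMorphism f₂) :
    IsGeometricMorphism (f₁ + f₂) := by
  intro s
  refine Set.Finite.subset ((h₁ s).union (h₂ s)) ?_
  intro t ht
  rw [Function.mem_support] at ht
  by_contra hc
  simp only [Set.mem_union, Function.mem_support, not_or, not_not] at hc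
  exact ht (by simp [Pi.add_apply, hc.1, hc.2])

theorem IsGeometricMorphism.neg {S T : Type*} {f : S → T → Λ}
    (h : IsGeometricMorphism f) : IsGeometricMorphism (-f) := by
  intro s
  refine Set.Finite.subset (h s) ?_
  intro t ht
  rw [Function.mem_support] at ht ⊢
  simpa using ht

theorem IsGeometricMorphism.sub {S T : Type*} {f₁ f₂ : S → T → Λ}
    (h₁ : IsGeometricMorphism f₁) (h₂ : IsGeometricMorphism f₂) :
    IsGeometricMorphism (f₁ - f₂) := by
  rw [sub_eq_add_neg]; exact h₁.add h₂.neg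

theorem isGeometricMorphism_zero {S T : Type*} :
    IsGeometricMorphism (0 : S → T → Λ) := by
  intro s
  convert Set.finite_empty
  simp [Function.support]

theorem isGeometricMorphism_idMor (S : Type*) :
    IsGeometricMorphism (idMor Λ S) := by
  classical
  intro s
  refine Set.Finite.subset (Set.finite_singleton s) fun t ht => ?_
  rw [Function.mem_support] at ht
  by_contra hc
  simp only [Set.mem_singleton_iff] at hc
  exact ht (by simp only [idMor, if_neg (fun h : s = t => hc h.symm)])

theorem geomComp_assoc {S T U V : Type*} (k : U → V → Λ) (g : T → U → Λ) (f : S → T → Λ)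
    (hg : IsGeometricMorphism g) (hf : IsGeometricMorphism f) :
    geomComp k (geomComp g f) = geomComp (geomComp k g) f := by
  classical
  funext s v
  set F : Finset T := (hf s).toFinset with hF
  set G : Finset U := F.biUnion fun t => (hg t).toFinset with hG
  have hFsub : Function.support (f s) ⊆ ↑F := by simp [hF]
  have hGsub : ∀ t ∈ F, Function.support (g t) ⊆ ↑G := by
    intro t ht u hu
    simp only [hG, Finset.coe_biUnion, Set.mem_iUnion, Finset.mem_coe]
    exact ⟨t, ht, by simpa using hu⟩
  have hmid : Function.support (geomComp g f s) ⊆ ↑G := by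
    intro u hu
    rw [Function.mem_support] at hu
    obtain ⟨t, hgt, hft⟩ := exists_of_geomComp_ne_zero hu
    exact hGsub t (by simpa [hF] using hft) (by simpa using hgt)
  rw [geomComp_eq_sum k (geomComp g f) hmid v, geomComp_eq_sum (geomComp k g) f hFsub v]
  calc ∑ u ∈ G, k u v * geomComp g f s u
      = ∑ u ∈ G, ∑ t ∈ F, k u v * (g t u * f s t) := by
        refine Finset.sum_congr rfl fun u _ => ?_
        rw [geomComp_eq_sum g f hFsub u, Finset.mul_sum]
    _ = ∑ t ∈ F, ∑ u ∈ G, k u v * (g t u * f s t) := Finset.sum_comm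
    _ = ∑ t ∈ F, (∑ u ∈ G, k u v * g t u) * f s t := by
        refine Finset.sum_congr rfl fun t _ => ?_
        rw [Finset.sum_mul]
        exact Finset.sum_congr rfl fun u _ => (mul_assoc _ _ _).symm
    _ = ∑ t ∈ F, geomComp k g t v * f s t := by
        refine Finset.sum_congr rfl fun t ht => ?_
        rw [geomComp_eq_sum k g (hGsub t ht) v]

theorem geomComp_zero_left {S T U : Type*} (f : S → T → Λ) :
    geomComp (0 : T → U → Λ) f = 0 := by
  funext s u
  simp [geomComp]

theorem geomComp_zero_right {S T U : Type*} (g : T → U → Λ) :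
    geomComp g (0 : S → T → Λ) = 0 := by
  funext s u
  simp [geomComp]

theorem geomComp_id_left {S T : Type*} (f : S → T → Λ) :
    geomComp (idMor Λ T) f = f := by
  classical
  funext s u
  have : ∀ t, t ≠ u → idMor Λ T t u * f s t = 0 := by
    intro t ht
    simp [idMor, ht]
  simp only [geomComp]
  rw [finsum_eq_single _ u this]
  simp [idMor]

theorem geomComp_id_right {S T : Type*} (g : S → T → Λ) :
    geomComp g (idMor Λ S) = g := by
  classical
  funext s u
  have : ∀ t, t ≠ s → g t u * idMor Λ S s t = 0 := by
    intro t ht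
    simp [idMor, Ne.symm ht]
  simp only [geomComp]
  rw [finsum_eq_single _ s this]
  simp [idMor]

theorem geomComp_neg_left {S T U : Type*} (g : T → U → Λ) (f : S → T → Λ) :
    geomComp (-g) f = -(geomComp g f) := by
  funext s u
  simp only [geomComp, Pi.neg_apply, neg_mul]
  exact finsum_neg_distrib _

theorem geomComp_neg_right {S T U : Type*} (g : T → U → Λ) (f : S → T → Λ) :
    geomComp g (-f) = -(geomComp g f) := by
  funext s u
  simp only [geomComp, Pi.neg_apply, mul_neg]
  exact finsum_neg_distrib _

theorem geomComp_add_left {S T U : Type*} (g₁ g₂ : T → U → Λ) (f : S → T → Λ)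
    (hf : IsGeometricMorphism f) :
    geomComp (g₁ + g₂) f = geomComp g₁ f + geomComp g₂ f := by
  funext s u
  simp only [geomComp, Pi.add_apply, add_mul]
  refine finsum_add_distrib ?_ ?_ <;>
    refine Set.Finite.subset (hf s) fun t ht => ?_ <;>
    · rw [Function.mem_support] at ht ⊢
      exact fun h0 => ht (by rw [h0, mul_zero])

theorem geomComp_add_right {S T U : Type*} (g : T → U → Λ) (f₁ f₂ : S → T → Λ)
    (h₁ : IsGeometricMorphism f₁) (h₂ : IsGeometricMorphism f₂) :
    geomComp g (f₁ + f₂) = geomComp g f₁ + geomComp g f₂ := by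
  funext s u
  simp only [geomComp, Pi.add_apply, mul_add]
  refine finsum_add_distrib ?_ ?_
  · refine Set.Finite.subset (h₁ s) fun t ht => ?_
    rw [Function.mem_support] at ht ⊢
    exact fun h0 => ht (by rw [h0, mul_zero])
  · refine Set.Finite.subset (h₂ s) fun t ht => ?_
    rw [Function.mem_support] at ht ⊢
    exact fun h0 => ht (by rw [h0, mul_zero])

theorem geomComp_sub_left {S T U : Type*} (g₁ g₂ : T → U → Λ) (f : S → T → Λ)
    (hf : IsGeometricMorphism f) :
    geomComp (g₁ - g₂) f = geomComp g₁ f - geomComp g₂ f := by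
  rw [sub_eq_add_neg, geomComp_add_left _ _ _ hf, geomComp_neg_left, sub_eq_add_neg]

theorem geomComp_sub_right {S T U : Type*} (g : T → U → Λ) (f₁ f₂ : S → T → Λ)
    (h₁ : IsGeometricMorphism f₁) (h₂ : IsGeometricMorphism f₂) :
    geomComp g (f₁ - f₂) = geomComp g f₁ - geomComp g f₂ := by
  rw [sub_eq_add_neg, geomComp_add_right _ _ _ h₁ h₂.neg, geomComp_neg_right, sub_eq_add_neg]

section Eps

variable {B : Type*} [MetricSpace B]

theorem IsEpsMorphism.mono {S T : Type*} {φ : S → B} {ψ : T → B} {f : S → T → Λ} {ε ε' : ℝ}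
    (hf : IsEpsMorphism φ ψ f ε) (h : ε ≤ ε') : IsEpsMorphism φ ψ f ε' :=
  ⟨hf.1, fun s t hst => lt_of_lt_of_le (hf.2 s t hst) h⟩

theorem IsEpsMorphism.gcomp {S T U : Type*} {φ : S → B} {ψ : T → B} {χ : U → B}
    {g : T → U → Λ} {f : S → T → Λ} {ε₁ ε₂ : ℝ}
    (hg : IsEpsMorphism ψ χ g ε₂) (hf : IsEpsMorphism φ ψ f ε₁) :
    IsEpsMorphism φ χ (geomComp g f) (ε₁ + ε₂) := by
  refine ⟨hg.1.comp hf.1, fun s u hne => ?_⟩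
  obtain ⟨t, hgt, hft⟩ := exists_of_geomComp_ne_zero hne
  calc dist (φ s) (χ u) ≤ dist (φ s) (ψ t) + dist (ψ t) (χ u) := dist_triangle _ _ _
    _ < ε₁ + ε₂ := add_lt_add (hf.2 s t hft) (hg.2 t u hgt)

theorem IsEpsMorphism.neg {S T : Type*} {φ : S → B} {ψ : T → B} {f : S → T → Λ} {ε : ℝ}
    (hf : IsEpsMorphism φ ψ f ε) : IsEpsMorphism φ ψ (-f) ε := by
  refine ⟨hf.1.neg, fun s t hst => hf.2 s t ?_⟩
  simpa using hst

theorem IsEpsMorphism.add {S T : Type*} {φ : S → B} {ψ : T → B} {f₁ f₂ : S → T → Λ} {ε : ℝ}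
    (h₁ : IsEpsMorphism φ ψ f₁ ε) (h₂ : IsEpsMorphism φ ψ f₂ ε) :
    IsEpsMorphism φ ψ (f₁ + f₂) ε := by
  refine ⟨h₁.1.add h₂.1, fun s t hst => ?_⟩
  by_cases hc : f₁ s t ≠ 0
  · exact h₁.2 s t hc
  · push_neg at hc
    refine h₂.2 s t fun h0 => ?_
    exact hst (by simp [Pi.add_apply, hc, h0])

theorem IsEpsMorphism.sub {S T : Type*} {φ : S → B} {ψ : T → B} {f₁ f₂ : S → T → Λ} {ε : ℝ}
    (h₁ : IsEpsMorphism φ ψ f₁ ε) (h₂ : IsEpsMorphism φ ψ f₂ ε) :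
    IsEpsMorphism φ ψ (f₁ - f₂) ε := by
  rw [sub_eq_add_neg]; exact h₁.add h₂.neg

end Eps

/-! ### Block matrices over a direct sum of geometric modules -/

/-- The block matrix `[[a, b], [c, e]] : Λ[S ⊕ T] → Λ[U ⊕ V]`. -/
def blockMor {S T U V : Type*} (a : S → U → Λ) (b : S → V → Λ)
    (c : T → U → Λ) (e : T → V → Λ) : S ⊕ T → U ⊕ V → Λ :=
  Sum.elim (fun s => Sum.elim (a s) (b s)) (fun t => Sum.elim (c t) (e t))

theorem blockMor_ext {S T U V : Type*} {a a' : S → U → Λ} {b b' : S → V → Λ}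
    {c c' : T → U → Λ} {e e' : T → V → Λ}
    (ha : a = a') (hb : b = b') (hc : c = c') (he : e = e') :
    blockMor a b c e = blockMor a' b' c' e' := by
  rw [ha, hb, hc, he]

theorem blockMor_add {S T U V : Type*} (a a' : S → U → Λ) (b b' : S → V → Λ)
    (c c' : T → U → Λ) (e e' : T → V → Λ) :
    blockMor a b c e + blockMor a' b' c' e' = blockMor (a + a') (b + b') (c + c') (e + e') := by
  funext x y
  cases x <;> cases y <;> rfl

theorem finsum_sum_type {α β M : Type*} [AddCommMonoid M] (F : α ⊕ β → M)
    (h₁ : (Function.support fun a => F (Sum.inl a)).Finite)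
    (h₂ : (Function.support fun b => F (Sum.inr b)).Finite) :
    ∑ᶠ x, F x = (∑ᶠ a, F (Sum.inl a)) + ∑ᶠ b, F (Sum.inr b) := by
  rw [← finsum_mem_univ F, ← Set.range_inl_union_range_inr,
    finsum_mem_union' Set.isCompl_range_inl_range_inr.disjoint
      (Set.Finite.subset (h₁.image Sum.inl) ?_) (Set.Finite.subset (h₂.image Sum.inr) ?_),
    finsum_mem_range Sum.inl_injective, finsum_mem_range Sum.inr_injective]
  · rintro x ⟨⟨a, rfl⟩, hx⟩
    exact ⟨a, hx, rfl⟩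
  · rintro x ⟨⟨b, rfl⟩, hx⟩
    exact ⟨b, hx, rfl⟩

theorem blockMor_isGeometricMorphism {S T U V : Type*} {a : S → U → Λ} {b : S → V → Λ}
    {c : T → U → Λ} {e : T → V → Λ} (ha : IsGeometricMorphism a) (hb : IsGeometricMorphism b)
    (hc : IsGeometricMorphism c) (he : IsGeometricMorphism e) :
    IsGeometricMorphism (blockMor a b c e) := by
  rintro (s | t)
  · refine Set.Finite.subset (((ha s).image Sum.inl).union ((hb s).image Sum.inr)) ?_
    rintro (u | v) hy <;> rw [Function.mem_support] at hy
    · exact Or.inl ⟨u, hy, rfl⟩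
    · exact Or.inr ⟨v, hy, rfl⟩
  · refine Set.Finite.subset (((hc t).image Sum.inl).union ((he t).image Sum.inr)) ?_
    rintro (u | v) hy <;> rw [Function.mem_support] at hy
    · exact Or.inl ⟨u, hy, rfl⟩
    · exact Or.inr ⟨v, hy, rfl⟩

theorem blockMor_eps {B : Type*} [MetricSpace B] {S T U V : Type*}
    {φ : S → B} {ψ : T → B} {φ' : U → B} {ψ' : V → B}
    {a : S → U → Λ} {b : S → V → Λ} {c : T → U → Λ} {e : T → V → Λ} {ε : ℝ}
    (ha : IsEpsMorphism φ φ' a ε) (hb : IsEpsMorphism φ ψ' b ε)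
    (hc : IsEpsMorphism ψ φ' c ε) (he : IsEpsMorphism ψ ψ' e ε) :
    IsEpsMorphism (Sum.elim φ ψ) (Sum.elim φ' ψ') (blockMor a b c e) ε := by
  refine ⟨blockMor_isGeometricMorphism ha.1 hb.1 hc.1 he.1, ?_⟩
  rintro (s | t) (u | v) hne
  · exact ha.2 s u hne
  · exact hb.2 s v hne
  · exact hc.2 t u hne
  · exact he.2 t v hne

theorem blockMor_comp {S T U V W X : Type*}
    {a : U → W → Λ} {b : U → X → Λ} {c : V → W → Λ} {e : V → X → Λ}
    {a' : S → U → Λ} {b' : S → V → Λ} {c' : T → U → Λ} {e' : T → V → Λ}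
    (ha' : IsGeometricMorphism a') (hb' : IsGeometricMorphism b')
    (hc' : IsGeometricMorphism c') (he' : IsGeometricMorphism e') :
    geomComp (blockMor a b c e) (blockMor a' b' c' e') =
      blockMor (geomComp a a' + geomComp c b') (geomComp b a' + geomComp e b')
        (geomComp a c' + geomComp c e') (geomComp b c' + geomComp e e') := by
  have hsplit : ∀ (x : S ⊕ T) (y : W ⊕ X),
      geomComp (blockMor a b c e) (blockMor a' b' c' e') x y =
      (∑ᶠ u, blockMor a b c e (Sum.inl u) y * blockMor a' b' c' e' x (Sum.inl u)) +
      ∑ᶠ v, blockMor a b c e (Sum.inr v) y * blockMor a' b' c' e' x (Sum.inr v) := by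
    intro x y
    cases x with
    | inl s =>
      refine finsum_sum_type _ ?_ ?_
      · refine Set.Finite.subset (ha' s) fun u hu => ?_
        rw [Function.mem_support] at hu ⊢
        exact fun h0 => hu (by simp [blockMor, h0])
      · refine Set.Finite.subset (hb' s) fun v hv => ?_
        rw [Function.mem_support] at hv ⊢
        exact fun h0 => hv (by simp [blockMor, h0])
    | inr t =>
      refine finsum_sum_type _ ?_ ?_
      · refine Set.Finite.subset (hc' t) fun u hu => ?_
        rw [Function.mem_support] at hu ⊢
        exact fun h0 => hu (by simp [blockMor, h0])
      · refine Set.Finite.subset (he' t) fun v hv => ?_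
        rw [Function.mem_support] at hv ⊢
        exact fun h0 => hv (by simp [blockMor, h0])
  funext x y
  cases x <;> cases y <;> rw [hsplit] <;> rfl

theorem coneD_eq {B : Type*} [MetricSpace B] (C C' : GeomComplex Λ B)
    (f : ∀ n, C.basis n → C'.basis n → Λ) (n : ℤ) :
    coneD C C' f n = blockMor (-(C.d n)) (f (n + 1))
      (0 : C'.basis (n + 1 + 1) → C.basis n → Λ) (C'.d (n + 1)) := by
  funext x y
  cases x <;> cases y <;> rfl

theorem idMor_sum (S T : Type*) :
    idMor Λ (S ⊕ T) = blockMor (idMor Λ S) (0 : S → T → Λ) (0 : T → S → Λ) (idMor Λ T) := by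
  classical
  funext x y
  cases x <;> cases y <;> simp [idMor, blockMor]

end GeomAux


/-- Let `C` and `C'` be `ε`-chain complexes of geometric modules
over a metric space `B` and let `f : C → C'` be an `ε`-chain equivalence.  Then
the algebraic mapping cone `C(f)` of `f` is `3ε`-contractible: there exist
morphisms `s` of geometric modules raising the degree of the cone by one, each
of radius `< 3ε` (i.e. each a `3ε`-morphism for the cone labels), such that
`d ∘ s + s ∘ d = id` in every degree of the cone (the equation on
`C(f)_{n+2} = coneBasis (n+1)` is stated for every `n : ℤ`, covering all
degrees). -/
theorem cone_of_epsChainEquiv_is_three_eps_contractible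
    {Λ : Type*} [Ring Λ] {B : Type*} [MetricSpace B]
    (C C' : GeomComplex Λ B) (f : ∀ n, C.basis n → C'.basis n → Λ)
    {ε : ℝ} (hε : 0 < ε)
    (hC : IsEpsComplex C ε) (hC' : IsEpsComplex C' ε)
    (hf : IsEpsChainEquiv C C' f ε) :
    ∃ s : ∀ n, coneBasis C C' n → coneBasis C C' (n + 1) → Λ,
      (∀ n, IsEpsMorphism (coneLabel C C' n) (coneLabel C C' (n + 1)) (s n) (3 * ε)) ∧
      ∀ n, geomComp (coneD C C' f (n + 1)) (s (n + 1)) + geomComp (s n) (coneD C C' f n) =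
        idMor Λ (coneBasis C C' (n + 1)) := by
    classical
  obtain ⟨⟨⟨hfgm, hfcm⟩, hfep⟩, g, ⟨⟨hggm, hgcm⟩, hgep⟩, h, h', hhep, h'ep, Hh, Hh'⟩ := hf
  have gmf : ∀ m : ℤ, IsGeometricMorphism (f m) := hfgm
  have gmg : ∀ m : ℤ, IsGeometricMorphism (g m) := hggm
  have gmh : ∀ m : ℤ, IsGeometricMorphism (h m) := fun m => (hhep m).1
  have gmh' : ∀ m : ℤ, IsGeometricMorphism (h' m) := fun m => (h'ep m).1
  have gmd : ∀ m : ℤ, IsGeometricMorphism (C.d m) := C.d_geom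
  have gmd' : ∀ m : ℤ, IsGeometricMorphism (C'.d m) := C'.d_geom
  refine ⟨fun n => blockMor
      (-(h n))
      (geomComp (h' (n + 1)) (geomComp (f (n + 1)) (h n)) -
        geomComp (f (n + 1 + 1)) (geomComp (h (n + 1)) (h n)))
      (g (n + 1))
      (h' (n + 1) - geomComp (h' (n + 1)) (geomComp (f (n + 1)) (g (n + 1))) +
        geomComp (f (n + 1 + 1)) (geomComp (h (n + 1)) (g (n + 1)))),
    ?_, ?_⟩
  · intro n
    exact blockMor_eps
      ((hhep n).neg.mono (by linarith))
      ((((h'ep (n + 1)).gcomp ((hfep (n + 1)).gcomp (hhep n))).mono (by linarith)).sub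
        (((hfep (n + 1 + 1)).gcomp ((hhep (n + 1)).gcomp (hhep n))).mono (by linarith)))
      ((hgep (n + 1)).mono (by linarith))
      ((((h'ep (n + 1)).mono (by linarith)).sub
        (((h'ep (n + 1)).gcomp ((hfep (n + 1)).gcomp (hgep (n + 1)))).mono (by linarith))).add
        (((hfep (n + 1 + 1)).gcomp ((hhep (n + 1)).gcomp (hgep (n + 1)))).mono (by linarith)))
  · intro n
    beta_reduce
    rw [coneD_eq C C' f (n + 1), coneD_eq C C' f n,
      blockMor_comp ((gmh (n + 1)).neg)
        (((gmh' (n + 1 + 1)).comp ((gmf (n + 1 + 1)).comp (gmh (n + 1)))).sub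
          ((gmf (n + 1 + 1 + 1)).comp ((gmh (n + 1 + 1)).comp (gmh (n + 1)))))
        (gmg (n + 1 + 1))
        (((gmh' (n + 1 + 1)).sub
            ((gmh' (n + 1 + 1)).comp ((gmf (n + 1 + 1)).comp (gmg (n + 1 + 1))))).add
          ((gmf (n + 1 + 1 + 1)).comp ((gmh (n + 1 + 1)).comp (gmg (n + 1 + 1))))),
      blockMor_comp ((gmd n).neg) (gmf (n + 1)) isGeometricMorphism_zero (gmd' (n + 1)),
      blockMor_add, idMor_sum]
    refine blockMor_ext ?_ ?_ ?_ ?_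
    · -- (1,1) entry
      simp only [geomComp_neg_left, geomComp_neg_right, neg_neg, geomComp_zero_left]
      rw [show idMor Λ (C.basis (n + 1)) =
          geomComp (C.d (n + 1)) (h (n + 1)) + geomComp (h n) (C.d n) +
            geomComp (g (n + 1)) (f (n + 1))
          from (eq_sub_iff_add_eq.mp (Hh n)).symm]
      abel
    · -- (1,2) entry
      have ed'2 : geomComp (C'.d (n + 1 + 1)) (h' (n + 1 + 1)) =
          idMor Λ (C'.basis (n + 1 + 1)) - geomComp (f (n + 1 + 1)) (g (n + 1 + 1)) -
            geomComp (h' (n + 1)) (C'.d (n + 1)) := eq_sub_of_add_eq (Hh' (n + 1))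
      have ed2 : geomComp (C.d (n + 1 + 1)) (h (n + 1 + 1)) =
          idMor Λ (C.basis (n + 1 + 1)) - geomComp (g (n + 1 + 1)) (f (n + 1 + 1)) -
            geomComp (h (n + 1)) (C.d (n + 1)) := eq_sub_of_add_eq (Hh (n + 1))
      have hidn : geomComp (C.d (n + 1)) (h (n + 1)) + geomComp (h n) (C.d n) +
          geomComp (g (n + 1)) (f (n + 1)) = idMor Λ (C.basis (n + 1)) :=
        eq_sub_iff_add_eq.mp (Hh n)
      have u2a : geomComp (C'.d (n + 1 + 1))
            (geomComp (h' (n + 1 + 1)) (geomComp (f (n + 1 + 1)) (h (n + 1)))) =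
          geomComp (f (n + 1 + 1)) (h (n + 1)) -
            geomComp (f (n + 1 + 1)) (geomComp (g (n + 1 + 1)) (geomComp (f (n + 1 + 1)) (h (n + 1)))) -
            geomComp (h' (n + 1)) (geomComp (f (n + 1)) (geomComp (C.d (n + 1)) (h (n + 1)))) := by
        rw [geomComp_assoc (C'.d (n + 1 + 1)) (h' (n + 1 + 1))
              (geomComp (f (n + 1 + 1)) (h (n + 1)))
              (gmh' (n + 1 + 1)) ((gmf (n + 1 + 1)).comp (gmh (n + 1))),
          ed'2,
          geomComp_sub_left _ _ (geomComp (f (n + 1 + 1)) (h (n + 1)))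
            ((gmf (n + 1 + 1)).comp (gmh (n + 1))),
          geomComp_sub_left _ _ (geomComp (f (n + 1 + 1)) (h (n + 1)))
            ((gmf (n + 1 + 1)).comp (gmh (n + 1))),
          geomComp_id_left (geomComp (f (n + 1 + 1)) (h (n + 1))),
          ← geomComp_assoc (f (n + 1 + 1)) (g (n + 1 + 1))
              (geomComp (f (n + 1 + 1)) (h (n + 1)))
              (gmg (n + 1 + 1)) ((gmf (n + 1 + 1)).comp (gmh (n + 1))),
          ← geomComp_assoc (h' (n + 1)) (C'.d (n + 1))
              (geomComp (f (n + 1 + 1)) (h (n + 1)))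
              (gmd' (n + 1)) ((gmf (n + 1 + 1)).comp (gmh (n + 1))),
          geomComp_assoc (C'.d (n + 1)) (f (n + 1 + 1)) (h (n + 1))
            (gmf (n + 1 + 1)) (gmh (n + 1)),
          ← hfcm (n + 1),
          ← geomComp_assoc (f (n + 1)) (C.d (n + 1)) (h (n + 1)) (gmd (n + 1)) (gmh (n + 1))]
      have u2b : geomComp (C'.d (n + 1 + 1))
            (geomComp (f (n + 1 + 1 + 1)) (geomComp (h (n + 1 + 1)) (h (n + 1)))) =
          geomComp (f (n + 1 + 1)) (h (n + 1)) -
            geomComp (f (n + 1 + 1)) (geomComp (g (n + 1 + 1)) (geomComp (f (n + 1 + 1)) (h (n + 1)))) -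
            geomComp (f (n + 1 + 1)) (geomComp (h (n + 1)) (geomComp (C.d (n + 1)) (h (n + 1)))) := by
        rw [geomComp_assoc (C'.d (n + 1 + 1)) (f (n + 1 + 1 + 1))
              (geomComp (h (n + 1 + 1)) (h (n + 1)))
              (gmf (n + 1 + 1 + 1)) ((gmh (n + 1 + 1)).comp (gmh (n + 1))),
          ← hfcm (n + 1 + 1),
          ← geomComp_assoc (f (n + 1 + 1)) (C.d (n + 1 + 1))
              (geomComp (h (n + 1 + 1)) (h (n + 1)))
              (gmd (n + 1 + 1)) ((gmh (n + 1 + 1)).comp (gmh (n + 1))),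
          geomComp_assoc (C.d (n + 1 + 1)) (h (n + 1 + 1)) (h (n + 1))
            (gmh (n + 1 + 1)) (gmh (n + 1)),
          ed2,
          geomComp_sub_left _ _ (h (n + 1)) (gmh (n + 1)),
          geomComp_sub_left _ _ (h (n + 1)) (gmh (n + 1)),
          geomComp_id_left (h (n + 1)),
          geomComp_sub_right (f (n + 1 + 1)) _ _
            ((gmh (n + 1)).sub (((gmg (n + 1 + 1)).comp (gmf (n + 1 + 1))).comp (gmh (n + 1))))
            (((gmh (n + 1)).comp (gmd (n + 1))).comp (gmh (n + 1))),
          geomComp_sub_right (f (n + 1 + 1)) _ _ (gmh (n + 1))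
            (((gmg (n + 1 + 1)).comp (gmf (n + 1 + 1))).comp (gmh (n + 1))),
          ← geomComp_assoc (g (n + 1 + 1)) (f (n + 1 + 1)) (h (n + 1))
            (gmf (n + 1 + 1)) (gmh (n + 1)),
          ← geomComp_assoc (h (n + 1)) (C.d (n + 1)) (h (n + 1)) (gmd (n + 1)) (gmh (n + 1))]
      have u3a : geomComp (geomComp (h' (n + 1)) (geomComp (f (n + 1)) (h n))) (C.d n) =
          geomComp (h' (n + 1)) (geomComp (f (n + 1)) (geomComp (h n) (C.d n))) := by
        rw [← geomComp_assoc (h' (n + 1)) (geomComp (f (n + 1)) (h n)) (C.d n)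
              ((gmf (n + 1)).comp (gmh n)) (gmd n),
          ← geomComp_assoc (f (n + 1)) (h n) (C.d n) (gmh n) (gmd n)]
      have u3b : geomComp (geomComp (f (n + 1 + 1)) (geomComp (h (n + 1)) (h n))) (C.d n) =
          geomComp (f (n + 1 + 1)) (geomComp (h (n + 1)) (geomComp (h n) (C.d n))) := by
        rw [← geomComp_assoc (f (n + 1 + 1)) (geomComp (h (n + 1)) (h n)) (C.d n)
              ((gmh (n + 1)).comp (gmh n)) (gmd n),
          ← geomComp_assoc (h (n + 1)) (h n) (C.d n) (gmh n) (gmd n)]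
      have u4a : geomComp (geomComp (h' (n + 1)) (geomComp (f (n + 1)) (g (n + 1)))) (f (n + 1)) =
          geomComp (h' (n + 1)) (geomComp (f (n + 1)) (geomComp (g (n + 1)) (f (n + 1)))) := by
        rw [← geomComp_assoc (h' (n + 1)) (geomComp (f (n + 1)) (g (n + 1))) (f (n + 1))
              ((gmf (n + 1)).comp (gmg (n + 1))) (gmf (n + 1)),
          ← geomComp_assoc (f (n + 1)) (g (n + 1)) (f (n + 1)) (gmg (n + 1)) (gmf (n + 1))]
      have u4b : geomComp (geomComp (f (n + 1 + 1)) (geomComp (h (n + 1)) (g (n + 1)))) (f (n + 1)) =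
          geomComp (f (n + 1 + 1)) (geomComp (h (n + 1)) (geomComp (g (n + 1)) (f (n + 1)))) := by
        rw [← geomComp_assoc (f (n + 1 + 1)) (geomComp (h (n + 1)) (g (n + 1))) (f (n + 1))
              ((gmh (n + 1)).comp (gmg (n + 1))) (gmf (n + 1)),
          ← geomComp_assoc (h (n + 1)) (g (n + 1)) (f (n + 1)) (gmg (n + 1)) (gmf (n + 1))]
      have q1 : geomComp (f (n + 1 + 1)) (geomComp (h (n + 1)) (geomComp (C.d (n + 1)) (h (n + 1)))) +
            geomComp (f (n + 1 + 1)) (geomComp (h (n + 1)) (geomComp (h n) (C.d n))) +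
            geomComp (f (n + 1 + 1)) (geomComp (h (n + 1)) (geomComp (g (n + 1)) (f (n + 1)))) =
          geomComp (f (n + 1 + 1)) (h (n + 1)) := by
        rw [← geomComp_add_right (f (n + 1 + 1)) _ _
              ((gmh (n + 1)).comp ((gmd (n + 1)).comp (gmh (n + 1))))
              ((gmh (n + 1)).comp ((gmh n).comp (gmd n))),
          ← geomComp_add_right (f (n + 1 + 1)) _ _
              (((gmh (n + 1)).comp ((gmd (n + 1)).comp (gmh (n + 1)))).add
                ((gmh (n + 1)).comp ((gmh n).comp (gmd n))))
              ((gmh (n + 1)).comp ((gmg (n + 1)).comp (gmf (n + 1)))),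
          ← geomComp_add_right (h (n + 1)) _ _
              ((gmd (n + 1)).comp (gmh (n + 1))) ((gmh n).comp (gmd n)),
          ← geomComp_add_right (h (n + 1)) _ _
              (((gmd (n + 1)).comp (gmh (n + 1))).add ((gmh n).comp (gmd n)))
              ((gmg (n + 1)).comp (gmf (n + 1))),
          hidn, geomComp_id_right]
      have q2 : geomComp (h' (n + 1)) (geomComp (f (n + 1)) (geomComp (C.d (n + 1)) (h (n + 1)))) +
            geomComp (h' (n + 1)) (geomComp (f (n + 1)) (geomComp (h n) (C.d n))) +
            geomComp (h' (n + 1)) (geomComp (f (n + 1)) (geomComp (g (n + 1)) (f (n + 1)))) =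
          geomComp (h' (n + 1)) (f (n + 1)) := by
        rw [← geomComp_add_right (h' (n + 1)) _ _
              ((gmf (n + 1)).comp ((gmd (n + 1)).comp (gmh (n + 1))))
              ((gmf (n + 1)).comp ((gmh n).comp (gmd n))),
          ← geomComp_add_right (h' (n + 1)) _ _
              (((gmf (n + 1)).comp ((gmd (n + 1)).comp (gmh (n + 1)))).add
                ((gmf (n + 1)).comp ((gmh n).comp (gmd n))))
              ((gmf (n + 1)).comp ((gmg (n + 1)).comp (gmf (n + 1)))),
          ← geomComp_add_right (f (n + 1)) _ _
              ((gmd (n + 1)).comp (gmh (n + 1))) ((gmh n).comp (gmd n)),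
          ← geomComp_add_right (f (n + 1)) _ _
              (((gmd (n + 1)).comp (gmh (n + 1))).add ((gmh n).comp (gmd n)))
              ((gmg (n + 1)).comp (gmf (n + 1))),
          hidn, geomComp_id_right]
      simp only [geomComp_neg_right]
      rw [geomComp_sub_right (C'.d (n + 1 + 1)) _ _
            ((gmh' (n + 1 + 1)).comp ((gmf (n + 1 + 1)).comp (gmh (n + 1))))
            ((gmf (n + 1 + 1 + 1)).comp ((gmh (n + 1 + 1)).comp (gmh (n + 1)))),
        u2a, u2b,
        geomComp_sub_left _ _ (C.d n) (gmd n), u3a, u3b,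
        geomComp_add_left _ _ (f (n + 1)) (gmf (n + 1)),
        geomComp_sub_left _ _ (f (n + 1)) (gmf (n + 1)), u4a, u4b,
        show (0 : C.basis (n + 1) → C'.basis (n + 1 + 1) → Λ) =
          (geomComp (f (n + 1 + 1)) (geomComp (h (n + 1)) (geomComp (C.d (n + 1)) (h (n + 1)))) +
            geomComp (f (n + 1 + 1)) (geomComp (h (n + 1)) (geomComp (h n) (C.d n))) +
            geomComp (f (n + 1 + 1)) (geomComp (h (n + 1)) (geomComp (g (n + 1)) (f (n + 1))))) -
          (geomComp (h' (n + 1)) (geomComp (f (n + 1)) (geomComp (C.d (n + 1)) (h (n + 1)))) +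
            geomComp (h' (n + 1)) (geomComp (f (n + 1)) (geomComp (h n) (C.d n))) +
            geomComp (h' (n + 1)) (geomComp (f (n + 1)) (geomComp (g (n + 1)) (f (n + 1))))) +
          geomComp (h' (n + 1)) (f (n + 1)) - geomComp (f (n + 1 + 1)) (h (n + 1))
          from by rw [q1, q2]; abel]
      abel
    · -- (2,1) entry
      simp only [geomComp_neg_left, geomComp_zero_left, geomComp_zero_right]
      rw [hgcm (n + 1)]
      abel
    · -- (2,2) entry
      have k2a : geomComp (C'.d (n + 1 + 1))
            (geomComp (h' (n + 1 + 1)) (geomComp (f (n + 1 + 1)) (g (n + 1 + 1)))) =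
          geomComp (geomComp (C'.d (n + 1 + 1)) (h' (n + 1 + 1)))
            (geomComp (f (n + 1 + 1)) (g (n + 1 + 1))) :=
        geomComp_assoc _ _ _ (gmh' (n + 1 + 1)) ((gmf (n + 1 + 1)).comp (gmg (n + 1 + 1)))
      have k2b : geomComp (geomComp (h' (n + 1)) (geomComp (f (n + 1)) (g (n + 1)))) (C'.d (n + 1)) =
          geomComp (geomComp (h' (n + 1)) (C'.d (n + 1)))
            (geomComp (f (n + 1 + 1)) (g (n + 1 + 1))) := by
        rw [← geomComp_assoc (h' (n + 1)) (geomComp (f (n + 1)) (g (n + 1))) (C'.d (n + 1))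
              ((gmf (n + 1)).comp (gmg (n + 1))) (gmd' (n + 1)),
          ← geomComp_assoc (f (n + 1)) (g (n + 1)) (C'.d (n + 1)) (gmg (n + 1)) (gmd' (n + 1)),
          hgcm (n + 1),
          geomComp_assoc (f (n + 1)) (C.d (n + 1)) (g (n + 1 + 1)) (gmd (n + 1)) (gmg (n + 1 + 1)),
          hfcm (n + 1),
          ← geomComp_assoc (C'.d (n + 1)) (f (n + 1 + 1)) (g (n + 1 + 1))
            (gmf (n + 1 + 1)) (gmg (n + 1 + 1)),
          geomComp_assoc (h' (n + 1)) (C'.d (n + 1))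
            (geomComp (f (n + 1 + 1)) (g (n + 1 + 1)))
            (gmd' (n + 1)) ((gmf (n + 1 + 1)).comp (gmg (n + 1 + 1)))]
      have k2 : geomComp (geomComp (C'.d (n + 1 + 1)) (h' (n + 1 + 1)))
              (geomComp (f (n + 1 + 1)) (g (n + 1 + 1))) +
            geomComp (geomComp (h' (n + 1)) (C'.d (n + 1)))
              (geomComp (f (n + 1 + 1)) (g (n + 1 + 1))) =
          geomComp (f (n + 1 + 1)) (g (n + 1 + 1)) -
            geomComp (f (n + 1 + 1)) (geomComp (g (n + 1 + 1)) (geomComp (f (n + 1 + 1)) (g (n + 1 + 1)))) := by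
        rw [← geomComp_add_left _ _ (geomComp (f (n + 1 + 1)) (g (n + 1 + 1)))
              ((gmf (n + 1 + 1)).comp (gmg (n + 1 + 1))),
          Hh' (n + 1),
          geomComp_sub_left _ _ (geomComp (f (n + 1 + 1)) (g (n + 1 + 1)))
            ((gmf (n + 1 + 1)).comp (gmg (n + 1 + 1))),
          geomComp_id_left (geomComp (f (n + 1 + 1)) (g (n + 1 + 1))),
          ← geomComp_assoc (f (n + 1 + 1)) (g (n + 1 + 1))
            (geomComp (f (n + 1 + 1)) (g (n + 1 + 1)))
            (gmg (n + 1 + 1)) ((gmf (n + 1 + 1)).comp (gmg (n + 1 + 1)))]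
      have k3a : geomComp (C'.d (n + 1 + 1))
            (geomComp (f (n + 1 + 1 + 1)) (geomComp (h (n + 1 + 1)) (g (n + 1 + 1)))) =
          geomComp (f (n + 1 + 1))
            (geomComp (geomComp (C.d (n + 1 + 1)) (h (n + 1 + 1))) (g (n + 1 + 1))) := by
        rw [geomComp_assoc (C'.d (n + 1 + 1)) (f (n + 1 + 1 + 1))
              (geomComp (h (n + 1 + 1)) (g (n + 1 + 1)))
              (gmf (n + 1 + 1 + 1)) ((gmh (n + 1 + 1)).comp (gmg (n + 1 + 1))),
          ← hfcm (n + 1 + 1),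
          ← geomComp_assoc (f (n + 1 + 1)) (C.d (n + 1 + 1))
              (geomComp (h (n + 1 + 1)) (g (n + 1 + 1)))
              (gmd (n + 1 + 1)) ((gmh (n + 1 + 1)).comp (gmg (n + 1 + 1))),
          geomComp_assoc (C.d (n + 1 + 1)) (h (n + 1 + 1)) (g (n + 1 + 1))
            (gmh (n + 1 + 1)) (gmg (n + 1 + 1))]
      have k3b : geomComp (geomComp (f (n + 1 + 1)) (geomComp (h (n + 1)) (g (n + 1)))) (C'.d (n + 1)) =
          geomComp (f (n + 1 + 1))
            (geomComp (geomComp (h (n + 1)) (C.d (n + 1))) (g (n + 1 + 1))) := by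
        rw [← geomComp_assoc (f (n + 1 + 1)) (geomComp (h (n + 1)) (g (n + 1))) (C'.d (n + 1))
              ((gmh (n + 1)).comp (gmg (n + 1))) (gmd' (n + 1)),
          ← geomComp_assoc (h (n + 1)) (g (n + 1)) (C'.d (n + 1)) (gmg (n + 1)) (gmd' (n + 1)),
          hgcm (n + 1),
          geomComp_assoc (h (n + 1)) (C.d (n + 1)) (g (n + 1 + 1)) (gmd (n + 1)) (gmg (n + 1 + 1))]
      have k3 : geomComp (f (n + 1 + 1))
              (geomComp (geomComp (C.d (n + 1 + 1)) (h (n + 1 + 1))) (g (n + 1 + 1))) +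
            geomComp (f (n + 1 + 1))
              (geomComp (geomComp (h (n + 1)) (C.d (n + 1))) (g (n + 1 + 1))) =
          geomComp (f (n + 1 + 1)) (g (n + 1 + 1)) -
            geomComp (f (n + 1 + 1)) (geomComp (g (n + 1 + 1)) (geomComp (f (n + 1 + 1)) (g (n + 1 + 1)))) := by
        rw [← geomComp_add_right (f (n + 1 + 1)) _ _
              (((gmd (n + 1 + 1)).comp (gmh (n + 1 + 1))).comp (gmg (n + 1 + 1)))
              (((gmh (n + 1)).comp (gmd (n + 1))).comp (gmg (n + 1 + 1))),
          ← geomComp_add_left _ _ (g (n + 1 + 1)) (gmg (n + 1 + 1)),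
          Hh (n + 1),
          geomComp_sub_left _ _ (g (n + 1 + 1)) (gmg (n + 1 + 1)),
          geomComp_id_left (g (n + 1 + 1)),
          geomComp_sub_right (f (n + 1 + 1)) _ _ (gmg (n + 1 + 1))
            (((gmg (n + 1 + 1)).comp (gmf (n + 1 + 1))).comp (gmg (n + 1 + 1))),
          ← geomComp_assoc (g (n + 1 + 1)) (f (n + 1 + 1)) (g (n + 1 + 1))
            (gmf (n + 1 + 1)) (gmg (n + 1 + 1))]
      rw [geomComp_zero_right,
        geomComp_add_right (C'.d (n + 1 + 1)) _ _
          ((gmh' (n + 1 + 1)).sub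
            ((gmh' (n + 1 + 1)).comp ((gmf (n + 1 + 1)).comp (gmg (n + 1 + 1)))))
          ((gmf (n + 1 + 1 + 1)).comp ((gmh (n + 1 + 1)).comp (gmg (n + 1 + 1)))),
        geomComp_sub_right (C'.d (n + 1 + 1)) _ _ (gmh' (n + 1 + 1))
          ((gmh' (n + 1 + 1)).comp ((gmf (n + 1 + 1)).comp (gmg (n + 1 + 1)))),
        geomComp_add_left _ _ (C'.d (n + 1)) (gmd' (n + 1)),
        geomComp_sub_left _ _ (C'.d (n + 1)) (gmd' (n + 1)),
        k2a, k2b, k3a, k3b,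
        show idMor Λ (C'.basis (n + 1 + 1)) =
          geomComp (f (n + 1 + 1)) (g (n + 1 + 1)) +
            (geomComp (C'.d (n + 1 + 1)) (h' (n + 1 + 1)) +
              geomComp (h' (n + 1)) (C'.d (n + 1))) -
            (geomComp (geomComp (C'.d (n + 1 + 1)) (h' (n + 1 + 1)))
                (geomComp (f (n + 1 + 1)) (g (n + 1 + 1))) +
              geomComp (geomComp (h' (n + 1)) (C'.d (n + 1)))
                (geomComp (f (n + 1 + 1)) (g (n + 1 + 1)))) +
            (geomComp (f (n + 1 + 1))
                (geomComp (geomComp (C.d (n + 1 + 1)) (h (n + 1 + 1))) (g (n + 1 + 1))) +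
              geomComp (f (n + 1 + 1))
                (geomComp (geomComp (h (n + 1)) (C.d (n + 1))) (g (n + 1 + 1))))
          from by rw [k2, k3, Hh' (n + 1)]; abel]
      abel
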